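/- arXiv:2212.00392 — 2 statements merged into one kernel-verified Lean document; each statement's English description precedes it below -/
import Mathlib

section
/- Let Z be an integrable real-valued random variable on a probability space (Ω, 𝔽, P) with cumulative distribution function F(z) = P(Z ≤ z), and let α ∈ (0,1). Define VaR_α(Z) := inf{ z ∈ ℝ : F(z) ≥ 1 − α }. Then the infimum in the definition of CVaR is attained at s = VaR_α(Z); that is, inf_{s ∈ ℝ} ( s + α⁻¹ E[max(Z − s, 0)] ) = VaR_α(Z) + α⁻¹ E[max(Z − VaR_α(Z), 0)]. -/
open MeasureTheory Filter Topology
open scoped ENNReal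

/-- The infimum in the definition of `CVaR_α` is attained at `s = VaR_α(Z)`,
where `VaR_α(Z) = inf { z : F(z) ≥ 1 - α }` and `F` is the cumulative
distribution function of `Z`. -/
theorem cvar_inf_attained_at_var
    {Ω : Type*} [MeasurableSpace Ω] (P : Measure Ω) [IsProbabilityMeasure P]
    (Z : Ω → ℝ) (hZ : Integrable Z P) (α : ℝ) (hα : α ∈ Set.Ioo (0 : ℝ) 1)
    (VaR : ℝ) (hVaR : VaR = sInf {z : ℝ | (1 : ℝ) - α ≤ (P {ω | Z ω ≤ z}).toReal}) :
    (⨅ s : ℝ, (s + α⁻¹ * ∫ ω, max (Z ω - s) 0 ∂P))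
      = VaR + α⁻¹ * ∫ ω, max (Z ω - VaR) 0 ∂P := by
  obtain ⟨hα0, hα1⟩ := hα
  -- measurable representative of Z
  set Zm : Ω → ℝ := hZ.1.mk Z with hZmdef
  have hZmSM : StronglyMeasurable Zm := hZ.1.stronglyMeasurable_mk
  have hZmM : Measurable Zm := hZmSM.measurable
  have hae : Z =ᵐ[P] Zm := hZ.1.ae_eq_mk
  have hZmInt : Integrable Zm P := hZ.congr hae
  have hmeas : ∀ z : ℝ, MeasurableSet {ω | Zm ω ≤ z} := fun z =>
    hZmM measurableSet_Iic
  have hPeq : ∀ z : ℝ, P {ω | Z ω ≤ z} = P {ω | Zm ω ≤ z} := fun z => by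
    apply measure_congr
    filter_upwards [hae] with ω h
    change (Z ω ≤ z) = (Zm ω ≤ z)
    rw [h]
  set F : ℝ → ℝ := fun z => (P {ω | Zm ω ≤ z}).toReal with hF
  set A : Set ℝ := {z : ℝ | 1 - α ≤ F z} with hA
  have hVaR' : VaR = sInf A := by
    rw [hVaR]
    congr 1
    ext z
    simp only [hA, Set.mem_setOf_eq, hF, hPeq z]
  have hFmono : Monotone F := by
    intro a b hab
    apply ENNReal.toReal_mono (measure_ne_top _ _)
    exact measure_mono (fun ω h => le_trans h hab)
  -- A is nonempty
  have hAne : A.Nonempty := by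
    have hunion : (⋃ n : ℕ, {ω | Zm ω ≤ (n : ℝ)}) = Set.univ := by
      ext ω
      simp only [Set.mem_iUnion, Set.mem_setOf_eq, Set.mem_univ, iff_true]
      exact exists_nat_ge (Zm ω)
    have hmono : Monotone (fun n : ℕ => {ω | Zm ω ≤ (n : ℝ)}) := by
      intro n m hnm ω h
      simp only [Set.mem_setOf_eq] at h ⊢
      exact le_trans h (Nat.cast_le.mpr hnm)
    have ht : Tendsto (fun n : ℕ => P {ω | Zm ω ≤ (n : ℝ)}) atTop (𝓝 1) := by
      have := tendsto_measure_iUnion_atTop (μ := P) hmono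
      rwa [hunion, measure_univ] at this
    have htr : Tendsto (fun n : ℕ => F (n : ℝ)) atTop (𝓝 1) := by
      have := (ENNReal.tendsto_toReal (by simp : (1 : ℝ≥0∞) ≠ ⊤)).comp ht
      exact this
    have : ∀ᶠ n : ℕ in atTop, 1 - α ≤ F (n : ℝ) :=
      htr.eventually (eventually_ge_nhds (by linarith))
    obtain ⟨n, hn⟩ := this.exists
    exact ⟨(n : ℝ), hn⟩
  -- A is bounded below
  have hAbdd : BddBelow A := by
    have hinter : (⋂ n : ℕ, {ω | Zm ω ≤ -(n : ℝ)}) = ∅ := by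
      ext ω
      simp only [Set.mem_iInter, Set.mem_setOf_eq, Set.mem_empty_iff_false, iff_false, not_forall]
      obtain ⟨n, hn⟩ := exists_nat_gt (-(Zm ω))
      exact ⟨n, by push_neg; linarith⟩
    have hanti : Antitone (fun n : ℕ => {ω | Zm ω ≤ -(n : ℝ)}) := by
      intro n m hnm ω h
      simp only [Set.mem_setOf_eq] at h ⊢
      refine le_trans h (by exact_mod_cast neg_le_neg (Nat.cast_le.mpr hnm))
    have ht : Tendsto (fun n : ℕ => P {ω | Zm ω ≤ -(n : ℝ)}) atTop (𝓝 0) := by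
      have := tendsto_measure_iInter_atTop (μ := P)
        (fun n => (hmeas _).nullMeasurableSet) hanti ⟨0, measure_ne_top _ _⟩
      rwa [hinter, measure_empty] at this
    have htr : Tendsto (fun n : ℕ => F (-(n : ℝ))) atTop (𝓝 0) := by
      have := (ENNReal.tendsto_toReal (by simp : (0 : ℝ≥0∞) ≠ ⊤)).comp ht
      exact this
    have : ∀ᶠ n : ℕ in atTop, F (-(n : ℝ)) < 1 - α :=
      htr.eventually (eventually_lt_nhds (by linarith))
    obtain ⟨n, hn⟩ := this.exists
    refine ⟨-(n : ℝ), fun a ha => ?_⟩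
    by_contra hcon
    push_neg at hcon
    exact absurd (le_trans ha (hFmono hcon.le)) (not_le.mpr hn)
  -- Right continuity: F VaR ≥ 1 - α
  have key1 : 1 - α ≤ F VaR := by
    have hinter : {ω | Zm ω ≤ VaR} = ⋂ n : ℕ, {ω | Zm ω ≤ VaR + 1 / (n + 1)} := by
      ext ω
      simp only [Set.mem_setOf_eq, Set.mem_iInter]
      constructor
      · intro h n
        have : (0 : ℝ) < 1 / (n + 1) := by positivity
        linarith
      · intro h
        by_contra hcon
        push_neg at hcon
        obtain ⟨n, hn⟩ := exists_nat_one_div_lt (sub_pos.mpr hcon)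
        have := h n
        linarith [hn]
    have hanti : Antitone (fun n : ℕ => {ω | Zm ω ≤ VaR + 1 / (n + 1)}) := by
      intro n m hnm ω h
      simp only [Set.mem_setOf_eq] at h ⊢
      have : (1 : ℝ) / (m + 1) ≤ 1 / (n + 1) := by
        apply one_div_le_one_div_of_le (by positivity)
        have : (n : ℝ) ≤ m := Nat.cast_le.mpr hnm
        linarith
      linarith
    have ht : Tendsto (fun n : ℕ => P {ω | Zm ω ≤ VaR + 1 / (n + 1)}) atTop
        (𝓝 (P {ω | Zm ω ≤ VaR})) := by
      have := tendsto_measure_iInter_atTop (μ := P)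
        (fun n => (hmeas _).nullMeasurableSet) hanti ⟨0, measure_ne_top _ _⟩
      rwa [← hinter] at this
    have htr : Tendsto (fun n : ℕ => F (VaR + 1 / (n + 1))) atTop (𝓝 (F VaR)) := by
      have := (ENNReal.tendsto_toReal (measure_ne_top P _)).comp ht
      exact this
    apply ge_of_tendsto htr
    filter_upwards with n
    have hlt : sInf A < VaR + 1 / (n + 1) := by
      rw [← hVaR']; nlinarith [one_div_pos.mpr (by positivity : (0:ℝ) < (n:ℝ) + 1)]
    obtain ⟨a, haA, halt⟩ := (csInf_lt_iff hAbdd hAne).mp hlt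
    exact le_trans haA (hFmono halt.le)
  -- Left limit: P(Zm < VaR) ≤ 1 - α
  have key2 : (P {ω | Zm ω < VaR}).toReal ≤ 1 - α := by
    have hunion : {ω | Zm ω < VaR} = ⋃ n : ℕ, {ω | Zm ω ≤ VaR - 1 / (n + 1)} := by
      ext ω
      simp only [Set.mem_setOf_eq, Set.mem_iUnion]
      constructor
      · intro h
        obtain ⟨n, hn⟩ := exists_nat_one_div_lt (sub_pos.mpr h)
        exact ⟨n, by linarith⟩
      · rintro ⟨n, hn⟩
        have : (0 : ℝ) < 1 / (n + 1) := by positivity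
        linarith
    have hmono : Monotone (fun n : ℕ => {ω | Zm ω ≤ VaR - 1 / (n + 1)}) := by
      intro n m hnm ω h
      simp only [Set.mem_setOf_eq] at h ⊢
      have : (1 : ℝ) / (m + 1) ≤ 1 / (n + 1) := by
        apply one_div_le_one_div_of_le (by positivity)
        have : (n : ℝ) ≤ m := Nat.cast_le.mpr hnm
        linarith
      linarith
    have ht : Tendsto (fun n : ℕ => P {ω | Zm ω ≤ VaR - 1 / (n + 1)}) atTop
        (𝓝 (P {ω | Zm ω < VaR})) := by
      have := tendsto_measure_iUnion_atTop (μ := P) hmono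
      rwa [← hunion] at this
    have htr : Tendsto (fun n : ℕ => F (VaR - 1 / (n + 1))) atTop
        (𝓝 ((P {ω | Zm ω < VaR}).toReal)) := by
      have := (ENNReal.tendsto_toReal (measure_ne_top P _)).comp ht
      exact this
    apply le_of_tendsto htr
    filter_upwards with n
    by_contra hcon
    push_neg at hcon
    have hmem : VaR - 1 / (n + 1) ∈ A := hcon.le
    have := csInf_le hAbdd hmem
    rw [← hVaR'] at this
    nlinarith [one_div_pos.mpr (by positivity : (0:ℝ) < (n:ℝ) + 1)]
  -- measure bounds
  have hcompl1 : (P {ω | VaR < Zm ω}).toReal ≤ α := by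
    have h1 : {ω | VaR < Zm ω} = {ω | Zm ω ≤ VaR}ᶜ := by
      ext ω; simp [not_le]
    have h2 : P {ω | VaR < Zm ω} = 1 - P {ω | Zm ω ≤ VaR} := by
      rw [h1, measure_compl (hmeas VaR) (measure_ne_top _ _), measure_univ]
    have h3 : (P {ω | VaR < Zm ω}).toReal = 1 - F VaR := by
      rw [h2, ENNReal.toReal_sub_of_le (prob_le_one) (by simp), ENNReal.toReal_one]
    linarith [h3, key1]
  have hcompl2 : α ≤ (P {ω | VaR ≤ Zm ω}).toReal := by
    have h1 : {ω | VaR ≤ Zm ω} = {ω | Zm ω < VaR}ᶜ := by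
      ext ω; simp [not_lt]
    have hms : MeasurableSet {ω | Zm ω < VaR} := hZmM measurableSet_Iio
    have h2 : P {ω | VaR ≤ Zm ω} = 1 - P {ω | Zm ω < VaR} := by
      rw [h1, measure_compl hms (measure_ne_top _ _), measure_univ]
    have h3 : (P {ω | VaR ≤ Zm ω}).toReal = 1 - (P {ω | Zm ω < VaR}).toReal := by
      rw [h2, ENNReal.toReal_sub_of_le (prob_le_one) (by simp), ENNReal.toReal_one]
    linarith [h3, key2]
  -- integrability and integral congruence
  have hint : ∀ s : ℝ, Integrable (fun ω => max (Zm ω - s) 0) P := fun s =>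
    (hZmInt.sub (integrable_const s)).pos_part
  have hicongr : ∀ s : ℝ, (∫ ω, max (Z ω - s) 0 ∂P) = ∫ ω, max (Zm ω - s) 0 ∂P := by
    intro s
    apply integral_congr_ae
    filter_upwards [hae] with ω h
    rw [h]
  -- main inequality
  have hmain : ∀ s : ℝ, VaR + α⁻¹ * ∫ ω, max (Z ω - VaR) 0 ∂P
      ≤ s + α⁻¹ * ∫ ω, max (Z ω - s) 0 ∂P := by
    intro s
    rw [hicongr, hicongr]
    have hαinv : (0 : ℝ) < α⁻¹ := by positivity
    rcases le_total VaR s with hcase | hcase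
    · -- s ≥ VaR
      set S : Set Ω := {ω | VaR < Zm ω} with hS
      have hSm : MeasurableSet S := by
        have : S = {ω | Zm ω ≤ VaR}ᶜ := by ext ω; simp [hS, not_le]
        rw [this]; exact (hmeas VaR).compl
      have hptw : ∀ ω, max (Zm ω - VaR) 0 - max (Zm ω - s) 0
          ≤ S.indicator (fun _ => s - VaR) ω := by
        intro ω
        by_cases hω : ω ∈ S
        · rw [Set.indicator_of_mem hω]
          simp only [hS, Set.mem_setOf_eq] at hω
          rcases le_total (Zm ω) s with h | h
          · rw [max_eq_left (by linarith), max_eq_right (by linarith)]; linarith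
          · rw [max_eq_left (by linarith), max_eq_left (by linarith)]; linarith
        · rw [Set.indicator_of_notMem hω]
          simp only [hS, Set.mem_setOf_eq, not_lt] at hω
          rw [max_eq_right (by linarith)]
          have : max (Zm ω - s) 0 ≥ 0 := le_max_right _ _
          linarith
      have hintind : Integrable (S.indicator (fun _ => s - VaR)) P :=
        (integrable_const (s - VaR)).indicator hSm
      have hIle : (∫ ω, max (Zm ω - VaR) 0 ∂P) - (∫ ω, max (Zm ω - s) 0 ∂P)
          ≤ (s - VaR) * (P S).toReal := by
        have h1 := integral_mono ((hint VaR).sub (hint s)) hintind hptw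
        simp only [Pi.sub_apply] at h1
        rw [integral_sub (hint VaR) (hint s)] at h1
        rwa [integral_indicator_const (s - VaR) hSm, smul_eq_mul, mul_comm] at h1
      have hfin : (P S).toReal ≤ α := hcompl1
      have h4 : α⁻¹ * ((∫ ω, max (Zm ω - VaR) 0 ∂P) - (∫ ω, max (Zm ω - s) 0 ∂P))
          ≤ s - VaR := by
        calc α⁻¹ * ((∫ ω, max (Zm ω - VaR) 0 ∂P) - (∫ ω, max (Zm ω - s) 0 ∂P))
            ≤ α⁻¹ * ((s - VaR) * (P S).toReal) := by
              exact mul_le_mul_of_nonneg_left hIle hαinv.le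
          _ = (s - VaR) * (α⁻¹ * (P S).toReal) := by ring
          _ ≤ (s - VaR) * 1 := by
              apply mul_le_mul_of_nonneg_left _ (by linarith)
              rw [← inv_mul_cancel₀ (ne_of_gt hα0)]
              exact mul_le_mul_of_nonneg_left hfin hαinv.le
          _ = s - VaR := mul_one _
      nlinarith [h4]
    · -- s ≤ VaR
      set S : Set Ω := {ω | VaR ≤ Zm ω} with hS
      have hSm : MeasurableSet S := by
        have : S = {ω | Zm ω < VaR}ᶜ := by ext ω; simp [hS, not_lt]
        rw [this]; exact (hZmM measurableSet_Iio).compl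
      have hptw : ∀ ω, max (Zm ω - VaR) 0 - max (Zm ω - s) 0
          ≤ S.indicator (fun _ => s - VaR) ω := by
        intro ω
        by_cases hω : ω ∈ S
        · rw [Set.indicator_of_mem hω]
          simp only [hS, Set.mem_setOf_eq] at hω
          rw [max_eq_left (by linarith), max_eq_left (by linarith)]; linarith
        · rw [Set.indicator_of_notMem hω]
          simp only [hS, Set.mem_setOf_eq, not_le] at hω
          rw [max_eq_right (by linarith)]
          have : max (Zm ω - s) 0 ≥ 0 := le_max_right _ _
          linarith
      have hintind : Integrable (S.indicator (fun _ => s - VaR)) P :=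
        (integrable_const (s - VaR)).indicator hSm
      have hIle : (∫ ω, max (Zm ω - VaR) 0 ∂P) - (∫ ω, max (Zm ω - s) 0 ∂P)
          ≤ (s - VaR) * (P S).toReal := by
        have h1 := integral_mono ((hint VaR).sub (hint s)) hintind hptw
        simp only [Pi.sub_apply] at h1
        rw [integral_sub (hint VaR) (hint s)] at h1
        rwa [integral_indicator_const (s - VaR) hSm, smul_eq_mul, mul_comm] at h1
      have hfin : α ≤ (P S).toReal := hcompl2
      have h4 : α⁻¹ * ((∫ ω, max (Zm ω - VaR) 0 ∂P) - (∫ ω, max (Zm ω - s) 0 ∂P))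
          ≤ s - VaR := by
        calc α⁻¹ * ((∫ ω, max (Zm ω - VaR) 0 ∂P) - (∫ ω, max (Zm ω - s) 0 ∂P))
            ≤ α⁻¹ * ((s - VaR) * (P S).toReal) := by
              exact mul_le_mul_of_nonneg_left hIle hαinv.le
          _ = (s - VaR) * (α⁻¹ * (P S).toReal) := by ring
          _ ≤ (s - VaR) * 1 := by
              apply mul_le_mul_of_nonpos_left _ (by linarith)
              rw [← inv_mul_cancel₀ (ne_of_gt hα0)]
              exact mul_le_mul_of_nonneg_left hfin hαinv.le
          _ = s - VaR := mul_one _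
      nlinarith [h4]
  -- conclude
  have hbdd : BddBelow (Set.range fun s : ℝ => s + α⁻¹ * ∫ ω, max (Z ω - s) 0 ∂P) := by
    refine ⟨VaR + α⁻¹ * ∫ ω, max (Z ω - VaR) 0 ∂P, ?_⟩
    rintro x ⟨s, rfl⟩
    exact hmain s
  exact le_antisymm (ciInf_le hbdd VaR) (le_ciInf hmain)
end

section
/- Fix n ∈ ℕ, a positive semidefinite matrix P ∈ ℝⁿˣⁿ, a positive semidefinite matrix Σ ∈ ℝⁿˣⁿ, and a risk level α ∈ (0,1). Let 𝒫 be the set of probability measures μ on ℝⁿ with finite second moments satisfying ∫ e dμ = 0 and ∫ e eᵀ dμ = Σ. Then the worst-case Conditional Value-at-Risk of the quadratic cost f(e) = eᵀ P e over 𝒫 equals α⁻¹ Tr(Σ P); that is, sup_{μ ∈ 𝒫} inf_{s ∈ ℝ} ( s + α⁻¹ ∫ max(eᵀ P e − s, 0) dμ(e) ) = α⁻¹ Tr(Σ P). -/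
open MeasureTheory Matrix
open scoped ENNReal

/-- The Conditional Value-at-Risk of `Z` at level `α` under the measure `μ`:
`CVaR_α^μ(Z) = inf_{s ∈ ℝ} ( s + α⁻¹ ∫ max(Z − s, 0) dμ )`. -/
noncomputable def cvar {Ω : Type*} [MeasurableSpace Ω]
    (μ : Measure Ω) (α : ℝ) (Z : Ω → ℝ) : ℝ :=
  ⨅ s : ℝ, (s + α⁻¹ * ∫ ω, max (Z ω - s) 0 ∂μ)

/-- The moment-based ambiguity set of probability measures on `ℝⁿ` with finite
second moments, zero mean, and second moment matrix `S`. -/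
def momentSet (n : ℕ) (S : Matrix (Fin n) (Fin n) ℝ) :
    Set (Measure (Fin n → ℝ)) :=
  {μ | IsProbabilityMeasure μ ∧ Integrable (fun e => ‖e‖ ^ 2) μ ∧
    (∫ e, e ∂μ) = 0 ∧ ∀ i j, ∫ e, e i * e j ∂μ = S i j}


section helpers

lemma my_integrable_dirac {α E : Type*} [MeasurableSpace α] [NormedAddCommGroup E]
    {f : α → E} (hf : StronglyMeasurable f) (a : α) : Integrable f (Measure.dirac a) := by
  refine ⟨hf.aestronglyMeasurable, ?_⟩
  unfold HasFiniteIntegral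
  rw [lintegral_dirac' _ hf.enorm]
  exact ENNReal.coe_lt_top

variable {n : ℕ}

lemma my_integrable_discrete {E : Type*} [NormedAddCommGroup E]
    (a c : ℝ) (v : Fin n → (Fin n → ℝ)) {f : (Fin n → ℝ) → E} (hf : StronglyMeasurable f) :
    Integrable f (ENNReal.ofReal a • Measure.dirac 0
      + ∑ k, ENNReal.ofReal c • (Measure.dirac (v k) + Measure.dirac (-(v k)))) := by
  rw [integrable_add_measure]
  constructor
  · exact (my_integrable_dirac hf 0).smul_measure ENNReal.ofReal_ne_top
  · refine integrable_finset_sum_measure.2 fun k _ => ?_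
    exact (integrable_add_measure.2 ⟨my_integrable_dirac hf _, my_integrable_dirac hf _⟩).smul_measure
      ENNReal.ofReal_ne_top

lemma my_integral_discrete {E : Type*} [NormedAddCommGroup E] [NormedSpace ℝ E] [CompleteSpace E]
    {a c : ℝ} (ha : 0 ≤ a) (hc : 0 ≤ c) (v : Fin n → (Fin n → ℝ))
    {f : (Fin n → ℝ) → E} (hf : StronglyMeasurable f) :
    ∫ e, f e ∂(ENNReal.ofReal a • Measure.dirac 0
      + ∑ k, ENNReal.ofReal c • (Measure.dirac (v k) + Measure.dirac (-(v k))))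
    = a • f 0 + ∑ k, c • (f (v k) + f (-(v k))) := by
  rw [integral_add_measure ((my_integrable_dirac hf 0).smul_measure ENNReal.ofReal_ne_top)
      (integrable_finset_sum_measure.2 fun k _ =>
        (integrable_add_measure.2 ⟨my_integrable_dirac hf _, my_integrable_dirac hf _⟩).smul_measure
          ENNReal.ofReal_ne_top),
    integral_smul_measure, integral_dirac' _ _ hf, ENNReal.toReal_ofReal ha,
    integral_finset_sum_measure (fun k _ =>
      (integrable_add_measure.2 ⟨my_integrable_dirac hf _, my_integrable_dirac hf _⟩).smul_measure
        ENNReal.ofReal_ne_top)]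
  congr 1
  refine Finset.sum_congr rfl fun k _ => ?_
  rw [integral_smul_measure,
    integral_add_measure (my_integrable_dirac hf _) (my_integrable_dirac hf _),
    integral_dirac' _ _ hf, integral_dirac' _ _ hf, ENNReal.toReal_ofReal hc]

end helpers


section facts
variable {n : ℕ} {P S : Matrix (Fin n) (Fin n) ℝ}

lemma Z_cont (P : Matrix (Fin n) (Fin n) ℝ) :
    Continuous (fun e : Fin n → ℝ => e ⬝ᵥ P.mulVec e) := by
  unfold dotProduct Matrix.mulVec
  exact continuous_finset_sum _ fun i _ => (continuous_apply i).mul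
    (continuous_finset_sum _ fun j _ => continuous_const.mul (continuous_apply j))

lemma Z_eq (P : Matrix (Fin n) (Fin n) ℝ) (e : Fin n → ℝ) :
    e ⬝ᵥ P.mulVec e = ∑ i, ∑ j, P i j * (e i * e j) := by
  simp only [dotProduct, Matrix.mulVec, Finset.mul_sum]
  exact Finset.sum_congr rfl fun i _ => Finset.sum_congr rfl fun j _ => by ring

lemma pair_integrable {μ : Measure (Fin n → ℝ)}
    (h2 : Integrable (fun e => ‖e‖ ^ 2) μ) (i j : Fin n) :
    Integrable (fun e => e i * e j) μ := by
  refine h2.mono' (((measurable_pi_apply i).mul (measurable_pi_apply j)).aestronglyMeasurable)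
    (ae_of_all _ fun e => ?_)
  have hi : |e i| ≤ ‖e‖ := by simpa using norm_le_pi_norm e i
  have hj : |e j| ≤ ‖e‖ := by simpa using norm_le_pi_norm e j
  have : ‖e i * e j‖ = |e i| * |e j| := by simp [abs_mul]
  rw [this, pow_two]
  exact mul_le_mul hi hj (abs_nonneg _) (norm_nonneg _)

lemma Z_integrable {μ : Measure (Fin n → ℝ)}
    (h2 : Integrable (fun e => ‖e‖ ^ 2) μ) :
    Integrable (fun e => e ⬝ᵥ P.mulVec e) μ := by
  have : (fun e : Fin n → ℝ => e ⬝ᵥ P.mulVec e)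
      = fun e => ∑ i, ∑ j, P i j * (e i * e j) := funext fun e => Z_eq P e
  rw [this]
  exact integrable_finset_sum _ fun i _ => integrable_finset_sum _ fun j _ =>
    (pair_integrable h2 i j).const_mul _

lemma Z_integral (hP : P.PosSemidef) {μ : Measure (Fin n → ℝ)}
    (hμ : μ ∈ momentSet n S) :
    ∫ e, e ⬝ᵥ P.mulVec e ∂μ = (S * P).trace := by
  have hPsym : ∀ i j, P j i = P i j := fun i j => by simpa using hP.1.apply i j
  have : (fun e : Fin n → ℝ => e ⬝ᵥ P.mulVec e)
      = fun e => ∑ i, ∑ j, P i j * (e i * e j) := funext fun e => Z_eq P e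
  rw [this, integral_finset_sum Finset.univ fun i _ => integrable_finset_sum Finset.univ fun j _ =>
    (pair_integrable hμ.2.1 i j).const_mul (P i j)]
  simp only [Matrix.trace, Matrix.diag, Matrix.mul_apply]
  refine Finset.sum_congr rfl fun i _ => ?_
  rw [integral_finset_sum _ fun j _ => (pair_integrable hμ.2.1 i j).const_mul (P i j)]
  refine Finset.sum_congr rfl fun j _ => ?_
  rw [integral_const_mul, hμ.2.2.2 i j, hPsym i j]
  ring

lemma Z_nonneg (hP : P.PosSemidef) (e : Fin n → ℝ) : 0 ≤ e ⬝ᵥ P.mulVec e := by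
  simpa using hP.dotProduct_mulVec_nonneg e

lemma g_nonneg (hP : P.PosSemidef) {α : ℝ} (hα0 : 0 < α) (hα1 : α < 1)
    {μ : Measure (Fin n → ℝ)} (hμ : μ ∈ momentSet n S) (s : ℝ) :
    0 ≤ s + α⁻¹ * ∫ e, max (e ⬝ᵥ P.mulVec e - s) 0 ∂μ := by
  haveI := hμ.1
  have hZi : Integrable (fun e => e ⬝ᵥ P.mulVec e) μ := Z_integrable hμ.2.1
  have hinv : 1 ≤ α⁻¹ := one_le_inv_iff₀.2 ⟨hα0, hα1.le⟩
  have hIpos : 0 ≤ ∫ e, max (e ⬝ᵥ P.mulVec e - s) 0 ∂μ :=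
    integral_nonneg fun e => le_max_right _ _
  rcases le_or_gt 0 s with hs | hs
  · have := mul_nonneg (le_trans zero_le_one hinv) hIpos
    linarith
  · have hmono : ∫ e, (e ⬝ᵥ P.mulVec e - s) ∂μ ≤ ∫ e, max (e ⬝ᵥ P.mulVec e - s) 0 ∂μ :=
      integral_mono (hZi.sub (integrable_const s)) ((hZi.sub (integrable_const s)).pos_part)
        fun e => le_max_left _ _
    have hsub : ∫ e, (e ⬝ᵥ P.mulVec e - s) ∂μ = (∫ e, e ⬝ᵥ P.mulVec e ∂μ) - s := by
      rw [integral_sub hZi (integrable_const s), integral_const]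
      simp
    have hEZ : 0 ≤ ∫ e, e ⬝ᵥ P.mulVec e ∂μ := integral_nonneg (Z_nonneg hP)
    nlinarith [mul_le_mul_of_nonneg_left hmono (le_trans zero_le_one hinv)]

lemma cvar_upper (hP : P.PosSemidef) {α : ℝ} (hα0 : 0 < α) (hα1 : α < 1)
    {μ : Measure (Fin n → ℝ)} (hμ : μ ∈ momentSet n S) :
    cvar μ α (fun e => e ⬝ᵥ P.mulVec e) ≤ α⁻¹ * (S * P).trace := by
  have hbdd : BddBelow (Set.range fun s : ℝ =>
      s + α⁻¹ * ∫ e, max (e ⬝ᵥ P.mulVec e - s) 0 ∂μ) :=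
    ⟨0, by rintro x ⟨s, rfl⟩; exact g_nonneg hP hα0 hα1 hμ s⟩
  have h0 : cvar μ α (fun e => e ⬝ᵥ P.mulVec e)
      ≤ 0 + α⁻¹ * ∫ e, max (e ⬝ᵥ P.mulVec e - 0) 0 ∂μ := ciInf_le hbdd 0
  have hmax : (fun e : Fin n → ℝ => max (e ⬝ᵥ P.mulVec e - 0) 0)
      = fun e => e ⬝ᵥ P.mulVec e := by
    funext e
    rw [sub_zero, max_eq_left (Z_nonneg hP e)]
  rw [hmax, Z_integral hP hμ, zero_add] at h0
  exact h0

end facts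
section exists_opt
variable {n : ℕ} {P S : Matrix (Fin n) (Fin n) ℝ}

lemma exists_opt (hP : P.PosSemidef) (hS : S.PosSemidef) {α : ℝ}
    (hα0 : 0 < α) (hα1 : α < 1) :
    ∃ μ ∈ momentSet n S,
      cvar μ α (fun e => e ⬝ᵥ P.mulVec e) = α⁻¹ * (S * P).trace := by
  rcases Nat.eq_zero_or_pos n with hn | hn
  · subst hn
    have hmem : Measure.dirac (0 : Fin 0 → ℝ) ∈ momentSet 0 S := by
      refine ⟨inferInstance, my_integrable_dirac ((continuous_norm.pow 2).stronglyMeasurable) 0,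
        ?_, fun i => i.elim0⟩
      exact integral_dirac' _ 0 stronglyMeasurable_id
    have htr : (S * P).trace = 0 := by simp [Matrix.trace]
    refine ⟨Measure.dirac 0, hmem, ?_⟩
    rw [htr, mul_zero]
    refine le_antisymm ?_ (le_ciInf fun s => g_nonneg hP hα0 hα1 hmem s)
    have := cvar_upper hP hα0 hα1 hmem
    rwa [htr, mul_zero] at this
  · open scoped MatrixOrder in obtain ⟨B, hB⟩ := CStarAlgebra.nonneg_iff_eq_star_mul_self.mp hS.nonneg
    have hB' : ∀ i j, S i j = ∑ k, B k i * B k j := by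
      intro i j
      rw [hB]
      simp [Matrix.mul_apply, Matrix.conjTranspose_apply]
    have hn' : (0 : ℝ) < n := by exact_mod_cast hn
    set t : ℝ := Real.sqrt ((n : ℝ) / α) with ht
    have ht2 : t ^ 2 = (n : ℝ) / α := Real.sq_sqrt (by positivity)
    set v : Fin n → (Fin n → ℝ) := fun k i => t * B k i with hv
    set c : ℝ := α / (2 * n) with hc
    have hcpos : 0 < c := by positivity
    have h1α : (0 : ℝ) ≤ 1 - α := by linarith
    set μ0 : Measure (Fin n → ℝ) := ENNReal.ofReal (1 - α) • Measure.dirac 0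
      + ∑ k, ENNReal.ofReal c • (Measure.dirac (v k) + Measure.dirac (-(v k))) with hμ0
    have hprob : IsProbabilityMeasure μ0 := by
      constructor
      rw [hμ0]
      simp only [Measure.add_apply, Measure.smul_apply, Measure.finset_sum_apply,
        smul_eq_mul, measure_univ, mul_one]
      rw [Finset.sum_const, Finset.card_univ, Fintype.card_fin, nsmul_eq_mul]
      have h1 : (ENNReal.ofReal c) * (1 + 1) = ENNReal.ofReal (c * 2) := by
        rw [one_add_one_eq_two, show (2 : ℝ≥0∞) = ENNReal.ofReal 2 by norm_num,
          ← ENNReal.ofReal_mul hcpos.le]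
      have h2 : (n : ℝ≥0∞) * ENNReal.ofReal (c * 2) = ENNReal.ofReal α := by
        rw [← ENNReal.ofReal_natCast n, ← ENNReal.ofReal_mul (Nat.cast_nonneg n)]
        congr 1
        rw [hc]
        field_simp
      rw [h1, h2, ← ENNReal.ofReal_add h1α hα0.le]
      norm_num
    have h2int : Integrable (fun e => ‖e‖ ^ 2) μ0 := by
      rw [hμ0]
      exact my_integrable_discrete _ _ v ((continuous_norm.pow 2).stronglyMeasurable)
    have hmean : ∫ e, e ∂μ0 = 0 := by
      rw [hμ0]
      exact (my_integral_discrete h1α hcpos.le v stronglyMeasurable_id).trans (by simp)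
    have hct : c * 2 * t ^ 2 = 1 := by
      rw [ht2, hc]
      field_simp
    have hmom : ∀ i j, ∫ e, e i * e j ∂μ0 = S i j := by
      intro i j
      rw [hμ0, my_integral_discrete h1α hcpos.le v (f := fun e : Fin n → ℝ => e i * e j)
        (((measurable_pi_apply i).mul (measurable_pi_apply j)).stronglyMeasurable)]
      rw [hB' i j]
      simp only [Pi.zero_apply, Pi.neg_apply, mul_zero, smul_eq_mul, zero_add,
        mul_neg, neg_mul, neg_neg]
      refine Finset.sum_congr rfl fun k _ => ?_
      show c * (t * B k i * (t * B k j) + t * B k i * (t * B k j)) = B k i * B k j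
      linear_combination (B k i * B k j) * hct
    have hmem : μ0 ∈ momentSet n S := ⟨hprob, h2int, hmean, hmom⟩
    refine ⟨μ0, hmem, le_antisymm (cvar_upper hP hα0 hα1 hmem) (le_ciInf fun s => ?_)⟩
    -- lower bound:  α⁻¹ Tr(SP) ≤ s + α⁻¹ ∫ max(Z - s, 0) dμ0
    rw [← Z_integral hP hmem]
    have hZneg : ∀ k, (-(v k)) ⬝ᵥ P.mulVec (-(v k)) = (v k) ⬝ᵥ P.mulVec (v k) := by
      intro k
      simp [Matrix.mulVec_neg, dotProduct_neg, neg_dotProduct]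
    have hZ0 : (0 : Fin n → ℝ) ⬝ᵥ P.mulVec 0 = 0 := by simp
    have hZint : ∫ e, e ⬝ᵥ P.mulVec e ∂μ0
        = ∑ k, c * ((v k) ⬝ᵥ P.mulVec (v k) + (v k) ⬝ᵥ P.mulVec (v k)) := by
      rw [hμ0, my_integral_discrete h1α hcpos.le v (Z_cont P).stronglyMeasurable]
      simp only [hZ0, smul_eq_mul, mul_zero, zero_add]
      exact Finset.sum_congr rfl fun k _ => by rw [hZneg k]
    have hMint : ∫ e, max (e ⬝ᵥ P.mulVec e - s) 0 ∂μ0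
        = (1 - α) * max (0 - s) 0
          + ∑ k, c * (max ((v k) ⬝ᵥ P.mulVec (v k) - s) 0
            + max ((v k) ⬝ᵥ P.mulVec (v k) - s) 0) := by
      rw [hμ0, my_integral_discrete h1α hcpos.le v (f := fun e : Fin n → ℝ => max (e ⬝ᵥ P.mulVec e - s) 0)
        (((Z_cont P).sub continuous_const).max continuous_const).stronglyMeasurable]
      simp only [hZ0, smul_eq_mul]
      congr 1
      exact Finset.sum_congr rfl fun k _ => by rw [hZneg k]
    rw [hZint, hMint]
    have hsumle : (∑ k, c * ((v k) ⬝ᵥ P.mulVec (v k) + (v k) ⬝ᵥ P.mulVec (v k))) - α * s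
        ≤ ∑ k, c * (max ((v k) ⬝ᵥ P.mulVec (v k) - s) 0
            + max ((v k) ⬝ᵥ P.mulVec (v k) - s) 0) := by
      have heq : ∑ k : Fin n, c * (((v k) ⬝ᵥ P.mulVec (v k) - s) + ((v k) ⬝ᵥ P.mulVec (v k) - s))
          = (∑ k, c * ((v k) ⬝ᵥ P.mulVec (v k) + (v k) ⬝ᵥ P.mulVec (v k))) - α * s := by
        have hterm : ∀ k : Fin n, c * (((v k) ⬝ᵥ P.mulVec (v k) - s) + ((v k) ⬝ᵥ P.mulVec (v k) - s))
            = c * ((v k) ⬝ᵥ P.mulVec (v k) + (v k) ⬝ᵥ P.mulVec (v k)) - 2 * c * s :=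
          fun k => by ring
        rw [Finset.sum_congr rfl fun k _ => hterm k, Finset.sum_sub_distrib,
          Finset.sum_const, Finset.card_univ, Fintype.card_fin, nsmul_eq_mul]
        have hns : (n : ℝ) * (2 * c * s) = α * s := by
          rw [hc]
          field_simp
        rw [hns]
      rw [← heq]
      exact Finset.sum_le_sum fun k _ => mul_le_mul_of_nonneg_left
        (add_le_add (le_max_left _ _) (le_max_left _ _)) hcpos.le
    have hm0 : (0 : ℝ) ≤ max (0 - s) 0 := le_max_right _ _
    have hinv : (0 : ℝ) < α⁻¹ := inv_pos.2 hα0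
    have hAM := mul_le_mul_of_nonneg_left hsumle hinv.le
    rw [mul_sub, ← mul_assoc, inv_mul_cancel₀ hα0.ne', one_mul] at hAM
    have hterm0 : (0 : ℝ) ≤ α⁻¹ * ((1 - α) * max (0 - s) 0) :=
      mul_nonneg hinv.le (mul_nonneg h1α hm0)
    have hdist : α⁻¹ * ((1 - α) * max (0 - s) 0
          + ∑ k, c * (max ((v k) ⬝ᵥ P.mulVec (v k) - s) 0
            + max ((v k) ⬝ᵥ P.mulVec (v k) - s) 0))
        = α⁻¹ * ((1 - α) * max (0 - s) 0)
          + α⁻¹ * ∑ k, c * (max ((v k) ⬝ᵥ P.mulVec (v k) - s) 0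
            + max ((v k) ⬝ᵥ P.mulVec (v k) - s) 0) := mul_add _ _ _
    linarith [hAM, hterm0, hdist]

end exists_opt


/-- The worst-case Conditional Value-at-Risk of the quadratic cost `eᵀ P e`
over the moment-based ambiguity set with zero mean and second moment `S`
equals `α⁻¹ Tr(S P)` (Lemma 3 of the paper). -/
theorem worst_case_cvar_quadratic
    (n : ℕ) (P S : Matrix (Fin n) (Fin n) ℝ)
    (hP : P.PosSemidef) (hS : S.PosSemidef)
    (α : ℝ) (hα : α ∈ Set.Ioo (0 : ℝ) 1) :
    (⨆ μ : momentSet n S, cvar μ.1 α (fun e => e ⬝ᵥ P.mulVec e))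
      = α⁻¹ * (S * P).trace := by
  obtain ⟨hα0, hα1⟩ := hα
  obtain ⟨μ0, hmem, hval⟩ := exists_opt hP hS hα0 hα1
  haveI : Nonempty (momentSet n S) := ⟨⟨μ0, hmem⟩⟩
  have hbdd : BddAbove (Set.range fun μ : momentSet n S =>
      cvar μ.1 α (fun e => e ⬝ᵥ P.mulVec e)) := by
    refine ⟨α⁻¹ * (S * P).trace, ?_⟩
    rintro x ⟨μ, rfl⟩
    exact cvar_upper hP hα0 hα1 μ.2
  refine le_antisymm (ciSup_le fun μ => cvar_upper hP hα0 hα1 μ.2) ?_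
  rw [← hval]
  exact le_ciSup hbdd ⟨μ0, hmem⟩
end
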